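/- Let X be a real N×N diagonal traceless matrix with Tr(X²) > 0, and define on R × R^N (coordinates (b, y)) and t > 0 the metric g(t) = (t/2)Tr(X²) db² + Σ_{ij} (e^{bX})_{ij} dy^i dy^j. Then g(t) satisfies the Ricci flow equation ∂g/∂t = -2 Ric(g(t)). -/

import Mathlib

/- STATEMENT 12: Let X be a real N×N diagonal traceless matrix with Tr(X²) > 0.
On ℝ × ℝ^N (coordinates (b, y), written as p : Fin (N+1) → ℝ with b = p 0) and
t > 0, the metric g(t) = (t/2)Tr(X²) db² + Σ_{ij} (e^{bX})_{ij} dy^i dy^j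
satisfies the Ricci flow equation ∂g/∂t = -2 Ric(g(t)).
This is the generalized Sol-solution of Remark 4.78. -/

noncomputable section

/-- Partial derivative in the `i`-th coordinate direction. -/
def pd {n : ℕ} (i : Fin n) (h : (Fin n → ℝ) → ℝ) (x : Fin n → ℝ) : ℝ :=
  fderiv ℝ h x (Pi.single i 1)

/-- Christoffel symbols Γ^k_{ij} of a metric `g` given in coordinates. -/
def christoffel {n : ℕ} (g : (Fin n → ℝ) → Matrix (Fin n) (Fin n) ℝ)
    (x : Fin n → ℝ) (k i j : Fin n) : ℝ :=
  (1 / 2) * ∑ l, (g x)⁻¹ k l *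
    (pd i (fun y => g y l j) x + pd j (fun y => g y l i) x - pd l (fun y => g y i j) x)

/-- The Ricci tensor of a metric `g` in coordinates. -/
def ricci {n : ℕ} (g : (Fin n → ℝ) → Matrix (Fin n) (Fin n) ℝ)
    (x : Fin n → ℝ) (i j : Fin n) : ℝ :=
  (∑ k, pd k (fun y => christoffel g y k i j) x)
    - (∑ k, pd i (fun y => christoffel g y k k j) x)
    + (∑ k, ∑ l, christoffel g x k k l * christoffel g x l i j)
    - (∑ k, ∑ l, christoffel g x k i l * christoffel g x l k j)

/-- The generalized Sol metric `(t/2)Tr(X²) db² + Σ_{ij} (e^{bX})_{ij} dy^i dy^j`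
on ℝ × ℝ^N, where `b = p 0` and `y^i = p (i+1)`, and `e^{bX}` is the matrix
exponential. -/
def gGenSol (N : ℕ) (X : Matrix (Fin N) (Fin N) ℝ) (t : ℝ)
    (p : Fin (N + 1) → ℝ) : Matrix (Fin (N + 1)) (Fin (N + 1)) ℝ :=
  Matrix.of fun i j =>
    if hi : i = 0 then
      (if j = 0 then t / 2 * (X * X).trace else 0)
    else if hj : j = 0 then 0
    else NormedSpace.exp (p 0 • X) (i.pred hi) (j.pred hj)

namespace SolAux

theorem pd_comp {n : ℕ} (f : ℝ → ℝ) (f' : ℝ) (x : Fin (n + 1) → ℝ)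
    (hf : HasDerivAt f f' (x 0)) (k : Fin (n + 1)) :
    pd k (fun y => f (y 0)) x = if k = 0 then f' else 0 := by
  have h0 : HasFDerivAt (fun y : Fin (n + 1) → ℝ => y 0)
      (ContinuousLinearMap.proj (R := ℝ) (φ := fun _ : Fin (n + 1) => ℝ) 0) x :=
    (ContinuousLinearMap.proj (R := ℝ) (φ := fun _ : Fin (n + 1) => ℝ) 0).hasFDerivAt
  have h : HasFDerivAt (fun y : Fin (n + 1) → ℝ => f (y 0))
      ((ContinuousLinearMap.smulRight (1 : ℝ →L[ℝ] ℝ) f').comp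
        (ContinuousLinearMap.proj (R := ℝ) (φ := fun _ : Fin (n + 1) => ℝ) 0)) x :=
    (hf.hasFDerivAt).comp x h0
  unfold pd
  rw [h.fderiv]
  simp [ContinuousLinearMap.proj_apply, Pi.single_apply]
  by_cases hk : k = 0
  · simp [hk]
  · simp [hk, Ne.symm hk]

variable (N : ℕ) (X : Matrix (Fin N) (Fin N) ℝ)

/-- Eigenvalue function, with `L 0 = 0` and `L (m+1) = X m m`. -/
def L (i : Fin (N + 1)) : ℝ := if h : i = 0 then 0 else X (i.pred h) (i.pred h)

/-- Diagonal entries of the metric. -/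
def dfun (t b : ℝ) (i : Fin (N + 1)) : ℝ :=
  if i = 0 then t / 2 * (X * X).trace else Real.exp (b * L N X i)

theorem exp_smul_diag (hdiag : X.IsDiag) (b : ℝ) :
    NormedSpace.exp (b • X) = Matrix.diagonal (fun m => Real.exp (b * X m m)) := by
  have h1 : b • X = Matrix.diagonal (fun m => b * X m m) := by
    ext m k
    by_cases h : m = k
    · subst h; simp [Matrix.diagonal_apply_eq]
    · simp [Matrix.diagonal_apply_ne _ h, hdiag h]
  have h2 : (NormedSpace.exp (fun m => b * X m m) : Fin N → ℝ)
      = fun m => Real.exp (b * X m m) := by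
    funext m
    rw [Pi.coe_exp, ← Real.exp_eq_exp_ℝ]
  rw [h1, Matrix.exp_diagonal, h2]

theorem gGenSol_eq (hdiag : X.IsDiag) (t : ℝ) (p : Fin (N + 1) → ℝ) :
    gGenSol N X t p = Matrix.diagonal (dfun N X t (p 0)) := by
  ext i j
  rw [gGenSol, exp_smul_diag N X hdiag]
  simp only [Matrix.of_apply]
  by_cases hi : i = 0
  · subst hi
    by_cases hj : j = 0
    · subst hj; simp [Matrix.diagonal_apply_eq, dfun]
    · simp [hj, Matrix.diagonal_apply_ne _ (Ne.symm hj)]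
  · by_cases hj : j = 0
    · subst hj; simp [hi, Matrix.diagonal_apply_ne _ hi]
    · simp only [dif_neg hi, dif_neg hj]
      by_cases hij : i = j
      · subst hij
        simp [Matrix.diagonal_apply_eq, dfun, hi, L]
      · have : i.pred hi ≠ j.pred hj := by
          intro h; exact hij (Fin.pred_inj.mp h)
        simp [Matrix.diagonal_apply_ne _ this, Matrix.diagonal_apply_ne _ hij]

theorem gGenSol_apply (hdiag : X.IsDiag) (t : ℝ) (p : Fin (N + 1) → ℝ) (i j : Fin (N + 1)) :
    gGenSol N X t p i j = if i = j then dfun N X t (p 0) i else 0 := by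
  rw [gGenSol_eq N X hdiag]
  by_cases h : i = j
  · subst h; simp [Matrix.diagonal_apply_eq]
  · simp [Matrix.diagonal_apply_ne _ h, h]

theorem dfun_ne (t b : ℝ) (ht : t ≠ 0) (hc : (X * X).trace ≠ 0) (i : Fin (N + 1)) :
    dfun N X t b i ≠ 0 := by
  unfold dfun
  by_cases h : i = 0
  · simp only [if_pos h]
    positivity
  · simp only [if_neg h]
    exact Real.exp_ne_zero _

theorem inv_gGenSol (hdiag : X.IsDiag) (t : ℝ) (ht : t ≠ 0) (hc : (X * X).trace ≠ 0)
    (p : Fin (N + 1) → ℝ) (i j : Fin (N + 1)) :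
    (gGenSol N X t p)⁻¹ i j = if i = j then (dfun N X t (p 0) i)⁻¹ else 0 := by
  have hinv : (gGenSol N X t p)⁻¹ = Matrix.diagonal (fun i => (dfun N X t (p 0) i)⁻¹) := by
    rw [gGenSol_eq N X hdiag]
    apply Matrix.inv_eq_right_inv
    rw [Matrix.diagonal_mul_diagonal]
    have : (fun i => dfun N X t (p 0) i * (dfun N X t (p 0) i)⁻¹)
        = fun _ : Fin (N + 1) => (1 : ℝ) := by
      funext i
      exact mul_inv_cancel₀ (dfun_ne N X t (p 0) ht hc i)
    rw [this]
    exact Matrix.diagonal_one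
  rw [hinv]
  by_cases h : i = j
  · subst h; simp [Matrix.diagonal_apply_eq]
  · simp [Matrix.diagonal_apply_ne _ h, h]

/-- pd of metric entries. -/
theorem pd_g (hdiag : X.IsDiag) (t : ℝ) (x : Fin (N + 1) → ℝ) (m l j : Fin (N + 1)) :
    pd m (fun y => gGenSol N X t y l j) x
      = if m = 0 ∧ l = j ∧ l ≠ 0 then L N X l * Real.exp (x 0 * L N X l) else 0 := by
  have hfun : (fun y => gGenSol N X t y l j)
      = fun y : Fin (N + 1) → ℝ =>
          (fun b => if l = j then dfun N X t b l else 0) (y 0) := by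
    funext y
    rw [gGenSol_apply N X hdiag]
  rw [hfun]
  by_cases hlj : l = j
  · by_cases hl : l = 0
    · have hd : HasDerivAt (fun b : ℝ => if l = j then dfun N X t b l else 0) 0 (x 0) := by
        simp only [if_pos hlj, dfun, if_pos hl]
        exact hasDerivAt_const _ _
      rw [pd_comp _ _ _ hd]
      simp [hl]
    · -- l = j, l ≠ 0 : exponential
      have hd : HasDerivAt (fun b => if l = j then dfun N X t b l else 0)
          (L N X l * Real.exp (x 0 * L N X l)) (x 0) := by
        simp only [if_pos hlj, dfun, if_neg hl]
        have := (hasDerivAt_mul_const (L N X l)).exp (x := x 0)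
        simpa [mul_comm] using this
      rw [pd_comp _ _ _ hd]
      have hj0 : ¬ j = 0 := hlj ▸ hl
      simp [hlj, hj0]
  · have hd : HasDerivAt (fun b : ℝ => if l = j then dfun N X t b l else 0) 0 (x 0) := by
      simp only [if_neg hlj]
      exact hasDerivAt_const _ _
    rw [pd_comp _ _ _ hd]
    simp [hlj]


/-- Closed form of the Christoffel symbols. -/
def Gam (t b : ℝ) (k i j : Fin (N + 1)) : ℝ :=
  if k = 0 then
    (if i = j ∧ i ≠ 0 then -(L N X i * Real.exp (b * L N X i)) / (t * (X * X).trace) else 0)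
  else
    (if (i = 0 ∧ j = k) ∨ (j = 0 ∧ i = k) then L N X k / 2 else 0)

theorem christoffel_eq (hdiag : X.IsDiag) (t : ℝ) (ht : t ≠ 0) (hc : (X * X).trace ≠ 0)
    (x : Fin (N + 1) → ℝ) (k i j : Fin (N + 1)) :
    christoffel (gGenSol N X t) x k i j = Gam N X t (x 0) k i j := by
  unfold christoffel
  simp only [inv_gGenSol N X hdiag t ht hc x, pd_g N X hdiag t x]
  rw [Finset.sum_eq_single k]
  · simp only [if_pos rfl]
    by_cases hk : k = 0
    · subst hk
      have e1 : ¬ (i = 0 ∧ (0 : Fin (N + 1)) = j ∧ (0 : Fin (N + 1)) ≠ 0) := by simp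
      have e2 : ¬ (j = 0 ∧ (0 : Fin (N + 1)) = i ∧ (0 : Fin (N + 1)) ≠ 0) := by simp
      rw [if_neg e1, if_neg e2]
      unfold Gam
      rw [if_pos rfl]
      by_cases hij : i = j ∧ i ≠ 0
      · have hcond : (0 : Fin (N + 1)) = 0 ∧ i = j ∧ i ≠ 0 := ⟨rfl, hij⟩
        rw [if_pos hcond, if_pos hij]
        unfold dfun
        rw [if_pos rfl]
        field_simp
        rw [if_pos trivial]
        field_simp
        ring
      · have hcond : ¬ ((0 : Fin (N + 1)) = 0 ∧ i = j ∧ i ≠ 0) := fun h => hij h.2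
        rw [if_neg hij, if_neg hcond]
        simp
    · have e3 : ¬ (k = 0 ∧ i = j ∧ i ≠ 0) := fun h => hk h.1
      rw [if_neg e3, sub_zero]
      unfold Gam
      rw [if_neg hk]
      unfold dfun
      rw [if_neg hk]
      by_cases h1 : i = 0 ∧ j = k
      · have h2 : ¬ (j = 0 ∧ k = i ∧ k ≠ 0) := by
          rintro ⟨hj0, hki, -⟩
          exact hk (h1.2 ▸ hj0)
        have hcond1 : i = 0 ∧ k = j ∧ k ≠ 0 := ⟨h1.1, h1.2.symm, hk⟩
        rw [if_pos hcond1, if_neg h2, if_pos (Or.inl h1), add_zero]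
        field_simp [Real.exp_ne_zero]
        rw [if_pos trivial]
        field_simp [Real.exp_ne_zero]
      · by_cases h2 : j = 0 ∧ i = k
        · have h1' : ¬ (i = 0 ∧ k = j ∧ k ≠ 0) := by
            rintro ⟨hi0, hkj, -⟩
            exact hk (h2.2.symm.trans hi0)
          have hcond2 : j = 0 ∧ k = i ∧ k ≠ 0 := ⟨h2.1, h2.2.symm, hk⟩
          rw [if_neg h1', if_pos hcond2, if_pos (Or.inr h2), zero_add]
          field_simp [Real.exp_ne_zero]
          rw [if_pos trivial]
          field_simp [Real.exp_ne_zero]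
        · have h1' : ¬ (i = 0 ∧ k = j ∧ k ≠ 0) := by
            rintro ⟨hi0, hkj, -⟩
            exact h1 ⟨hi0, hkj.symm⟩
          have h2' : ¬ (j = 0 ∧ k = i ∧ k ≠ 0) := by
            rintro ⟨hj0, hki, -⟩
            exact h2 ⟨hj0, hki.symm⟩
          have h3 : ¬ ((i = 0 ∧ j = k) ∨ (j = 0 ∧ i = k)) := fun h => h.elim h1 h2
          rw [if_neg h1', if_neg h2', if_neg h3]
          simp
  · intro l _ hl
    rw [if_neg (Ne.symm hl), zero_mul]
  · intro h
    exact absurd (Finset.mem_univ k) h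

theorem pd_christoffel (hdiag : X.IsDiag) (t : ℝ) (ht : t ≠ 0) (hc : (X * X).trace ≠ 0)
    (x : Fin (N + 1) → ℝ) (m k i j : Fin (N + 1)) :
    pd m (fun y => christoffel (gGenSol N X t) y k i j) x
      = if m = 0 ∧ k = 0 ∧ i = j ∧ i ≠ 0
        then -(L N X i * (Real.exp (x 0 * L N X i) * L N X i)) / (t * (X * X).trace)
        else 0 := by
  have hfun : (fun y => christoffel (gGenSol N X t) y k i j)
      = fun y : Fin (N + 1) → ℝ => (fun b => Gam N X t b k i j) (y 0) := by
    funext y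
    exact christoffel_eq N X hdiag t ht hc y k i j
  rw [hfun]
  by_cases hcnd : k = 0 ∧ i = j ∧ i ≠ 0
  · have hfe : (fun b => Gam N X t b k i j)
        = fun b => -(L N X i * Real.exp (b * L N X i)) / (t * (X * X).trace) := by
      funext b
      unfold Gam
      rw [if_pos hcnd.1, if_pos hcnd.2]
    have h1 : HasDerivAt (fun b : ℝ => Real.exp (b * L N X i))
        (Real.exp (x 0 * L N X i) * L N X i) (x 0) := (hasDerivAt_mul_const _).exp
    have hd : HasDerivAt (fun b => Gam N X t b k i j)
        (-(L N X i * (Real.exp (x 0 * L N X i) * L N X i)) / (t * (X * X).trace)) (x 0) := by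
      rw [hfe]
      exact ((h1.const_mul (L N X i)).neg).div_const _
    rw [pd_comp _ _ _ hd]
    by_cases hm : m = 0
    · rw [if_pos hm, if_pos ⟨hm, hcnd⟩]
    · rw [if_neg hm, if_neg (fun h => hm h.1)]
  · have hd : HasDerivAt (fun b => Gam N X t b k i j) 0 (x 0) := by
      by_cases hk : k = 0
      · have hfe : (fun b => Gam N X t b k i j) = fun _ => (0 : ℝ) := by
          funext b
          unfold Gam
          rw [if_pos hk, if_neg (fun h => hcnd ⟨hk, h⟩)]
        rw [hfe]
        exact hasDerivAt_const _ _
      · have hfe : (fun b => Gam N X t b k i j)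
            = fun _ => (if (i = 0 ∧ j = k) ∨ (j = 0 ∧ i = k) then L N X k / 2 else 0) := by
          funext b
          unfold Gam
          rw [if_neg hk]
        rw [hfe]
        exact hasDerivAt_const _ _
    rw [pd_comp _ _ _ hd]
    have : ¬ (m = 0 ∧ k = 0 ∧ i = j ∧ i ≠ 0) := fun h => hcnd h.2
    rw [if_neg this]
    simp

theorem L_zero : L N X 0 = 0 := by simp [L]

theorem Gam_kk (t b : ℝ) (k l : Fin (N + 1)) :
    Gam N X t b k k l = if l = 0 then L N X k / 2 else 0 := by
  unfold Gam
  by_cases hk : k = 0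
  · rw [if_pos hk]
    have h1 : ¬ (k = l ∧ k ≠ 0) := fun h => h.2 hk
    rw [if_neg h1, hk, L_zero]
    simp
  · rw [if_neg hk]
    by_cases hl : l = 0
    · rw [if_pos (Or.inr ⟨hl, rfl⟩), if_pos hl]
    · have : ¬ ((k = 0 ∧ l = k) ∨ (l = 0 ∧ k = k)) := by
        rintro (⟨h, -⟩ | ⟨h, -⟩)
        · exact hk h
        · exact hl h
      rw [if_neg this, if_neg hl]

theorem Gam_k0 (t b : ℝ) (k l : Fin (N + 1)) :
    Gam N X t b k 0 l = if l = k then L N X k / 2 else 0 := by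
  unfold Gam
  by_cases hk : k = 0
  · rw [if_pos hk]
    have h1 : ¬ ((0 : Fin (N + 1)) = l ∧ (0 : Fin (N + 1)) ≠ 0) := by simp
    rw [if_neg h1, hk, L_zero]
    simp
  · rw [if_neg hk]
    by_cases hl : l = k
    · rw [if_pos (Or.inl ⟨rfl, hl⟩), if_pos hl]
    · have : ¬ (((0 : Fin (N+1)) = 0 ∧ l = k) ∨ (l = 0 ∧ (0 : Fin (N+1)) = k)) := by
        rintro (⟨-, h⟩ | ⟨-, h⟩)
        · exact hl h
        · exact hk h.symm
      rw [if_neg this, if_neg hl]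

theorem sum_L : ∑ k, L N X k = X.trace := by
  rw [Fin.sum_univ_succ]
  simp [L, Fin.succ_ne_zero, Fin.pred_succ, Matrix.trace, Matrix.diag]

theorem sum_L_sq (hdiag : X.IsDiag) : ∑ k, L N X k * L N X k = (X * X).trace := by
  have h : (X * X).trace = ∑ m, X m m * X m m := by
    rw [Matrix.trace]
    apply Finset.sum_congr rfl
    intro m _
    rw [Matrix.diag_apply, Matrix.mul_apply, Finset.sum_eq_single m]
    · intro l _ hl
      rw [hdiag (Ne.symm hl), zero_mul]
    · intro h
      exact absurd (Finset.mem_univ m) h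
  rw [h, Fin.sum_univ_succ]
  simp [L, Fin.succ_ne_zero, Fin.pred_succ]

theorem T1_eq (hdiag : X.IsDiag) (t : ℝ) (ht : t ≠ 0) (hc : (X * X).trace ≠ 0)
    (x : Fin (N + 1) → ℝ) (i j : Fin (N + 1)) :
    ∑ k, pd k (fun y => christoffel (gGenSol N X t) y k i j) x
      = if i = j ∧ i ≠ 0
        then -(L N X i * (Real.exp (x 0 * L N X i) * L N X i)) / (t * (X * X).trace)
        else 0 := by
  have h : ∀ k : Fin (N + 1), pd k (fun y => christoffel (gGenSol N X t) y k i j) x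
      = if k = 0 then (if i = j ∧ i ≠ 0
          then -(L N X i * (Real.exp (x 0 * L N X i) * L N X i)) / (t * (X * X).trace)
          else 0) else 0 := by
    intro k
    rw [pd_christoffel N X hdiag t ht hc x k k i j]
    by_cases hk : k = 0
    · by_cases hij : i = j ∧ i ≠ 0
      · rw [if_pos ⟨hk, hk, hij⟩, if_pos hk, if_pos hij]
      · rw [if_neg (fun h => hij h.2.2), if_pos hk, if_neg hij]
    · rw [if_neg (fun h => hk h.1), if_neg hk]
  rw [Finset.sum_congr rfl (fun k _ => h k), Fintype.sum_ite_eq' (0 : Fin (N + 1))]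

theorem T2_eq (hdiag : X.IsDiag) (t : ℝ) (ht : t ≠ 0) (hc : (X * X).trace ≠ 0)
    (x : Fin (N + 1) → ℝ) (i j : Fin (N + 1)) :
    ∑ k, pd i (fun y => christoffel (gGenSol N X t) y k k j) x = 0 := by
  apply Finset.sum_eq_zero
  intro k _
  rw [pd_christoffel N X hdiag t ht hc x i k k j]
  have : ¬ (i = 0 ∧ k = 0 ∧ k = j ∧ k ≠ 0) := by
    rintro ⟨-, h0, -, hne⟩
    exact hne h0
  rw [if_neg this]

theorem T3_eq (htr : X.trace = 0) (t b : ℝ) (i j : Fin (N + 1)) :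
    ∑ k, ∑ l, Gam N X t b k k l * Gam N X t b l i j = 0 := by
  have h : ∀ k : Fin (N + 1), ∑ l, Gam N X t b k k l * Gam N X t b l i j
      = L N X k * (Gam N X t b 0 i j / 2) := by
    intro k
    have h2 : ∀ l, Gam N X t b k k l * Gam N X t b l i j
        = if l = 0 then L N X k * (Gam N X t b 0 i j / 2) else 0 := by
      intro l
      rw [Gam_kk]
      by_cases hl : l = 0
      · subst hl
        rw [if_pos rfl, if_pos rfl]
        ring
      · rw [if_neg hl, if_neg hl, zero_mul]
    rw [Finset.sum_congr rfl (fun l _ => h2 l), Fintype.sum_ite_eq' (0 : Fin (N + 1))]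
  rw [Finset.sum_congr rfl (fun k _ => h k), ← Finset.sum_mul, sum_L, htr, zero_mul]

theorem T4_eq (hdiag : X.IsDiag) (t b : ℝ) (i j : Fin (N + 1)) :
    ∑ k, ∑ l, Gam N X t b k i l * Gam N X t b l k j
      = if i = 0 then (if j = 0 then (X * X).trace / 4 else 0)
        else (if i = j
          then -(L N X i * (Real.exp (b * L N X i) * L N X i)) / (t * (X * X).trace)
          else 0) := by
  by_cases hi : i = 0
  · subst hi
    rw [if_pos rfl]
    have h : ∀ k : Fin (N + 1), ∑ l, Gam N X t b k 0 l * Gam N X t b l k j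
        = L N X k / 2 * Gam N X t b k k j := by
      intro k
      have h2 : ∀ l, Gam N X t b k 0 l * Gam N X t b l k j
          = if l = k then L N X k / 2 * Gam N X t b k k j else 0 := by
        intro l
        rw [Gam_k0]
        by_cases hl : l = k
        · subst hl
          rw [if_pos rfl, if_pos rfl]
        · rw [if_neg hl, if_neg hl, zero_mul]
      rw [Finset.sum_congr rfl (fun l _ => h2 l), Fintype.sum_ite_eq' k]
    rw [Finset.sum_congr rfl (fun k _ => h k)]
    by_cases hj : j = 0
    · subst hj
      rw [if_pos rfl]
      have h3 : ∀ k ∈ Finset.univ, L N X k / 2 * Gam N X t b k k 0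
          = L N X k * L N X k / 4 := by
        intro k _
        rw [Gam_kk, if_pos rfl]
        ring
      rw [Finset.sum_congr rfl h3, ← Finset.sum_div, sum_L_sq N X hdiag]
    · rw [if_neg hj]
      apply Finset.sum_eq_zero
      intro k _
      rw [Gam_kk, if_neg hj, mul_zero]
  · rw [if_neg hi]
    have hGami : ∀ k l, Gam N X t b k i l
        = (if k = 0 ∧ l = i then -(L N X i * Real.exp (b * L N X i)) / (t * (X * X).trace)
            else 0)
          + (if l = 0 ∧ k = i then L N X i / 2 else 0) := by
      intro k l
      unfold Gam
      by_cases hk : k = 0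
      · rw [if_pos hk]
        have e2 : ¬ (l = 0 ∧ k = i) := fun h => hi (h.2.symm.trans hk)
        rw [if_neg e2, add_zero]
        by_cases hl : l = i
        · rw [if_pos ⟨hl.symm, hi⟩, if_pos ⟨hk, hl⟩]
        · rw [if_neg (fun h => hl h.1.symm), if_neg (fun h => hl h.2)]
      · rw [if_neg hk]
        have e1 : ¬ (k = 0 ∧ l = i) := fun h => hk h.1
        rw [if_neg e1, zero_add]
        by_cases h2 : l = 0 ∧ k = i
        · rw [if_pos (Or.inr ⟨h2.1, h2.2.symm⟩), if_pos h2, h2.2]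
        · have e3 : ¬ ((i = 0 ∧ l = k) ∨ (l = 0 ∧ i = k)) := by
            rintro (⟨h0, -⟩ | ⟨hl0, hik⟩)
            · exact hi h0
            · exact h2 ⟨hl0, hik.symm⟩
          rw [if_neg e3, if_neg h2]
    have hinner : ∀ k : Fin (N + 1), ∑ l, Gam N X t b k i l * Gam N X t b l k j
        = (if k = 0 then -(L N X i * Real.exp (b * L N X i)) / (t * (X * X).trace)
              * Gam N X t b i 0 j else 0)
          + (if k = i then L N X i / 2 * Gam N X t b 0 i j else 0) := by
      intro k
      rw [Finset.sum_congr rfl (fun l _ => by rw [hGami k l, add_mul]),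
        Finset.sum_add_distrib]
      congr 1
      · by_cases hk : k = 0
        · subst hk
          rw [if_pos rfl]
          have h4 : ∀ l, (if (0 : Fin (N + 1)) = 0 ∧ l = i
                then -(L N X i * Real.exp (b * L N X i)) / (t * (X * X).trace) else 0)
                  * Gam N X t b l 0 j
              = if l = i then -(L N X i * Real.exp (b * L N X i)) / (t * (X * X).trace)
                  * Gam N X t b i 0 j else 0 := by
            intro l
            by_cases hl : l = i
            · subst hl
              rw [if_pos ⟨rfl, rfl⟩, if_pos rfl]
            · rw [if_neg (fun h => hl h.2), if_neg hl, zero_mul]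
          rw [Finset.sum_congr rfl (fun l _ => h4 l), Fintype.sum_ite_eq' i]
        · rw [if_neg hk]
          apply Finset.sum_eq_zero
          intro l _
          rw [if_neg (fun h => hk h.1), zero_mul]
      · by_cases hk : k = i
        · subst hk
          rw [if_pos rfl]
          have h4 : ∀ l, (if l = 0 ∧ k = k then L N X k / 2 else 0) * Gam N X t b l k j
              = if l = 0 then L N X k / 2 * Gam N X t b 0 k j else 0 := by
            intro l
            by_cases hl : l = 0
            · subst hl
              rw [if_pos ⟨rfl, rfl⟩, if_pos rfl]
            · rw [if_neg (fun h => hl h.1), if_neg hl, zero_mul]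
          rw [Finset.sum_congr rfl (fun l _ => h4 l), Fintype.sum_ite_eq' (0 : Fin (N + 1))]
        · rw [if_neg hk]
          apply Finset.sum_eq_zero
          intro l _
          rw [if_neg (fun h => hk h.2), zero_mul]
    rw [Finset.sum_congr rfl (fun k _ => hinner k), Finset.sum_add_distrib,
      Fintype.sum_ite_eq' (0 : Fin (N + 1)), Fintype.sum_ite_eq' i]
    have hg0 : Gam N X t b 0 i j
        = if i = j then -(L N X i * Real.exp (b * L N X i)) / (t * (X * X).trace) else 0 := by
      unfold Gam
      rw [if_pos rfl]
      by_cases hij : i = j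
      · rw [if_pos ⟨hij, hi⟩, if_pos hij]
      · rw [if_neg (fun h => hij h.1), if_neg hij]
    rw [hg0, Gam_k0]
    by_cases hij : i = j
    · rw [if_pos hij.symm, if_pos hij, if_pos hij]
      ring
    · rw [if_neg (fun h => hij h.symm), if_neg hij, if_neg hij]
      simp

theorem ricci_eq (hdiag : X.IsDiag) (htr : X.trace = 0)
    (t : ℝ) (ht : t ≠ 0) (hc : (X * X).trace ≠ 0)
    (x : Fin (N + 1) → ℝ) (i j : Fin (N + 1)) :
    ricci (gGenSol N X t) x i j = if i = 0 ∧ j = 0 then -((X * X).trace / 4) else 0 := by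
  unfold ricci
  rw [T1_eq N X hdiag t ht hc x i j, T2_eq N X hdiag t ht hc x i j]
  simp only [christoffel_eq N X hdiag t ht hc x]
  rw [T3_eq N X htr t (x 0) i j, T4_eq N X hdiag t (x 0) i j]
  by_cases hi : i = 0
  · rw [if_pos hi]
    have h1 : ¬ (i = j ∧ i ≠ 0) := fun h => h.2 hi
    rw [if_neg h1]
    by_cases hj : j = 0
    · have e2 : i = 0 ∧ j = 0 := ⟨hi, hj⟩
      rw [if_pos hj, if_pos e2]
      ring
    · have e2 : ¬ (i = 0 ∧ j = 0) := fun h => hj h.2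
      rw [if_neg hj, if_neg e2]
      ring
  · have e0 : ¬ (i = 0 ∧ j = 0) := fun h => hi h.1
    rw [if_neg hi, if_neg e0]
    by_cases hij : i = j
    · have e1 : i = j ∧ i ≠ 0 := ⟨hij, hi⟩
      rw [if_pos e1, if_pos hij]
      ring
    · have e1 : ¬ (i = j ∧ i ≠ 0) := fun h => hij h.1
      rw [if_neg e1, if_neg hij]
      ring

end SolAux

/-- The generalized Sol-solution satisfies the Ricci flow equation
`∂g/∂t = -2 Ric(g(t))` for all `t > 0`, whenever `X` is diagonal, traceless,
and `Tr(X²) > 0`. -/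
theorem generalized_sol_is_ricci_flow
    (N : ℕ) (X : Matrix (Fin N) (Fin N) ℝ)
    (hdiag : X.IsDiag) (htraceless : X.trace = 0) (hX : 0 < (X * X).trace) :
    ∀ t : ℝ, 0 < t → ∀ (p : Fin (N + 1) → ℝ) (i j : Fin (N + 1)),
      HasDerivAt (fun s => gGenSol N X s p i j)
        (-2 * ricci (gGenSol N X t) p i j) t := by
  intro t ht p i j
  have ht' : t ≠ 0 := ne_of_gt ht
  have hc : (X * X).trace ≠ 0 := ne_of_gt hX
  rw [SolAux.ricci_eq N X hdiag htraceless t ht' hc p i j]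
  by_cases hi : i = 0
  · by_cases hj : j = 0
    · have e2 : i = 0 ∧ j = 0 := ⟨hi, hj⟩
      rw [if_pos e2]
      have hfun : (fun s => gGenSol N X s p i j) = fun s => s / 2 * (X * X).trace := by
        funext s
        rw [gGenSol]
        simp only [Matrix.of_apply]
        rw [dif_pos hi, if_pos hj]
      rw [hfun]
      have hd : HasDerivAt (fun s : ℝ => s / 2 * (X * X).trace)
          ((1 : ℝ) / 2 * (X * X).trace) t := ((hasDerivAt_id t).div_const 2).mul_const _
      convert hd using 1
      ring
    · have e2 : ¬ (i = 0 ∧ j = 0) := fun h => hj h.2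
      rw [if_neg e2]
      have hfun : (fun s => gGenSol N X s p i j) = fun _ : ℝ => (0 : ℝ) := by
        funext s
        rw [gGenSol]
        simp only [Matrix.of_apply]
        rw [dif_pos hi, if_neg hj]
      rw [hfun, show (-2 * 0 : ℝ) = 0 by ring]
      exact hasDerivAt_const _ _
  · have e2 : ¬ (i = 0 ∧ j = 0) := fun h => hi h.1
    rw [if_neg e2]
    have hfun : (fun s => gGenSol N X s p i j) = fun _ : ℝ => gGenSol N X 0 p i j := by
      funext s
      rw [gGenSol, gGenSol]
      simp only [Matrix.of_apply]
      rw [dif_neg hi, dif_neg hi]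
    rw [hfun, show (-2 * 0 : ℝ) = 0 by ring]
    exact hasDerivAt_const _ _

end
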